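/- Let $X$ be a Polish space, $Y$ a Polish space, $r\geq 1$, and $C : X \times \mathcal{P}_r(Y) \to \mathbb{R}$ continuous (with $\mathcal{P}_r(Y)$ carrying the $\mathcal{W}_r$-topology). For $\epsilon \geq 0$ and $N \in \mathbb{N}$, the set $\Gamma_N^\epsilon$ of all tuples $(x_1,p_1),\ldots,(x_N,p_N) \in (X\times\mathcal{P}_r(Y))^N$ such that for all $m_1,\ldots,m_N \in \mathcal{P}_r(Y)$ with $\sum_{i=1}^N p_i = \sum_{i=1}^N m_i$ one has $\sum_{i=1}^N C(x_i,p_i) \leq \sum_{i=1}^N C(x_i,m_i) + \epsilon$, is closed in $(X\times\mathcal{P}_r(Y))^N$. -/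

import Mathlib

open MeasureTheory Filter Topology
open scoped ENNReal NNReal

noncomputable section

/-- A coupling of `μ` and `ν`: a measure on the product with the given marginals. -/
def IsCoupling {X Y : Type*} [MeasurableSpace X] [MeasurableSpace Y]
    (π : Measure (X × Y)) (μ : Measure X) (ν : Measure Y) : Prop :=
  π.map Prod.fst = μ ∧ π.map Prod.snd = ν

/-- `WrPow r p q` is the `r`-th power of the `r`-Wasserstein distance:
`inf { ∫ d(y₁,y₂)^r dπ : π coupling of p, q }`. -/
noncomputable def WrPow {Y : Type*} [MeasurableSpace Y] [PseudoMetricSpace Y]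
    (r : ℝ) (p q : Measure Y) : ℝ :=
  sInf {v | ∃ π : Measure (Y × Y), IsCoupling π p q ∧ v = ∫ z, dist z.1 z.2 ^ r ∂π}

/-- Convergence in the `r`-Wasserstein metric. -/
def TendstoWr {Y : Type*} [MeasurableSpace Y] [PseudoMetricSpace Y]
    (r : ℝ) (pk : ℕ → Measure Y) (p : Measure Y) : Prop :=
  Tendsto (fun k => WrPow r (pk k) p) atTop (nhds 0)

/-- Finite `r`-th moment. -/
def FiniteMomentR {Y : Type*} [MeasurableSpace Y] [PseudoMetricSpace Y]
    (r : ℝ) (p : Measure Y) : Prop :=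
  ∃ y0 : Y, Integrable (fun y => dist y y0 ^ r) p

/-- Membership in `𝒫_r(Y)`: a probability measure with finite `r`-th moment. -/
def MemPr {Y : Type*} [MeasurableSpace Y] [PseudoMetricSpace Y]
    (r : ℝ) (p : Measure Y) : Prop :=
  IsProbabilityMeasure p ∧ FiniteMomentR r p

/-- The set `Γ_N^ε` of `N`-tuples satisfying the `ε`-relaxed `C`-monotonicity inequality. -/
def GammaNEps {X Y : Type*} [MeasurableSpace Y] [PseudoMetricSpace Y]
    (C : X → Measure Y → ℝ) (r ε : ℝ) (N : ℕ) :
    Set ((Fin N → X) × (Fin N → Measure Y)) :=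
  {xp | (∀ i, MemPr r (xp.2 i)) ∧
    ∀ m : Fin N → Measure Y, (∀ i, MemPr r (m i)) →
      (∑ i, xp.2 i) = (∑ i, m i) →
      (∑ i, C (xp.1 i) (xp.2 i)) ≤ (∑ i, C (xp.1 i) (m i)) + ε}

section AuxGamma

variable {Y : Type*} [MeasurableSpace Y] [MetricSpace Y] [OpensMeasurableSpace Y]
  [SecondCountableTopology Y]

private lemma rpow_two_bound {r : ℝ} (hr : 0 ≤ r) {a b : ℝ} (ha : 0 ≤ a) (hb : 0 ≤ b) :
    (a + b) ^ r ≤ 2 ^ r * (a ^ r + b ^ r) := by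
  have hmax : a + b ≤ 2 * max a b := by
    rw [two_mul]; exact add_le_add (le_max_left a b) (le_max_right a b)
  calc (a + b) ^ r ≤ (2 * max a b) ^ r :=
        Real.rpow_le_rpow (add_nonneg ha hb) hmax hr
    _ = 2 ^ r * (max a b) ^ r :=
        Real.mul_rpow (by norm_num) (le_max_of_le_left ha)
    _ ≤ 2 ^ r * (a ^ r + b ^ r) := by
        refine mul_le_mul_of_nonneg_left ?_ (Real.rpow_nonneg (by norm_num) r)
        rcases le_total a b with h | h
        · rw [max_eq_right h]
          exact le_add_of_nonneg_left (Real.rpow_nonneg ha r)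
        · rw [max_eq_left h]
          exact le_add_of_nonneg_right (Real.rpow_nonneg hb r)

private lemma continuous_rpow_dist {r : ℝ} (hr : 0 ≤ r) (y0 : Y) :
    Continuous fun y : Y => dist y y0 ^ r :=
  (Real.continuous_rpow_const hr).comp (continuous_id.dist continuous_const)

private lemma integrable_moment {r : ℝ} (hr : 0 ≤ r) (q : Measure Y) [IsFiniteMeasure q]
    (h : FiniteMomentR r q) (y0 : Y) : Integrable (fun y => dist y y0 ^ r) q := by
  obtain ⟨y1, h1⟩ := h
  have hmeas : AEStronglyMeasurable (fun y => dist y y0 ^ r) q :=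
    (continuous_rpow_dist hr y0).aestronglyMeasurable
  have hg : Integrable (fun y => 2 ^ r * (dist y y1 ^ r + dist y1 y0 ^ r)) q :=
    (h1.add (integrable_const _)).const_mul _
  refine hg.mono' hmeas ?_
  filter_upwards with y
  rw [Real.norm_eq_abs, abs_of_nonneg (Real.rpow_nonneg dist_nonneg r)]
  calc dist y y0 ^ r ≤ (dist y y1 + dist y1 y0) ^ r :=
        Real.rpow_le_rpow dist_nonneg (dist_triangle _ _ _) hr
    _ ≤ 2 ^ r * (dist y y1 ^ r + dist y1 y0 ^ r) :=
        rpow_two_bound hr dist_nonneg dist_nonneg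

private lemma lintegral_moment_lt_top {r : ℝ} (hr : 0 ≤ r) (q : Measure Y) [IsFiniteMeasure q]
    (h : FiniteMomentR r q) (y0 : Y) :
    ∫⁻ y, ENNReal.ofReal (dist y y0 ^ r) ∂q < ∞ := by
  have hi := (integrable_moment hr q h y0).hasFiniteIntegral
  refine lt_of_eq_of_lt ?_ hi
  refine lintegral_congr fun y => ?_
  rw [← Real.enorm_eq_ofReal (Real.rpow_nonneg dist_nonneg r)]

private lemma measurable_cost {r : ℝ} (hr : 0 ≤ r) :
    Measurable fun z : Y × Y => ENNReal.ofReal (dist z.1 z.2 ^ r) :=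
  (ENNReal.continuous_ofReal.comp
    ((Real.continuous_rpow_const hr).comp continuous_dist)).measurable

private lemma cost_lt_top {r : ℝ} (hr : 0 ≤ r) {q1 q2 : Measure Y}
    (h1 : MemPr r q1) (h2 : MemPr r q2)
    {π : Measure (Y × Y)} (hπ : IsCoupling π q1 q2) :
    ∫⁻ z, ENNReal.ofReal (dist z.1 z.2 ^ r) ∂π < ∞ := by
  haveI := h1.1; haveI := h2.1
  obtain ⟨y0, -⟩ := h1.2
  have hb : ∀ z : Y × Y, ENNReal.ofReal (dist z.1 z.2 ^ r) ≤
      ENNReal.ofReal (2 ^ r) * (ENNReal.ofReal (dist z.1 y0 ^ r)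
        + ENNReal.ofReal (dist y0 z.2 ^ r)) := by
    intro z
    rw [← ENNReal.ofReal_add (Real.rpow_nonneg dist_nonneg r)
      (Real.rpow_nonneg dist_nonneg r), ← ENNReal.ofReal_mul (Real.rpow_nonneg (by norm_num) r)]
    apply ENNReal.ofReal_le_ofReal
    calc dist z.1 z.2 ^ r ≤ (dist z.1 y0 + dist y0 z.2) ^ r :=
          Real.rpow_le_rpow dist_nonneg (dist_triangle _ _ _) hr
      _ ≤ 2 ^ r * (dist z.1 y0 ^ r + dist y0 z.2 ^ r) :=
          rpow_two_bound hr dist_nonneg dist_nonneg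
  have hm1 : Measurable fun z : Y × Y => ENNReal.ofReal (dist z.1 y0 ^ r) :=
    (ENNReal.continuous_ofReal.comp
      ((Real.continuous_rpow_const hr).comp (continuous_fst.dist continuous_const))).measurable
  have hm2 : Measurable fun z : Y × Y => ENNReal.ofReal (dist y0 z.2 ^ r) :=
    (ENNReal.continuous_ofReal.comp
      ((Real.continuous_rpow_const hr).comp (continuous_const.dist continuous_snd))).measurable
  calc ∫⁻ z, ENNReal.ofReal (dist z.1 z.2 ^ r) ∂π
      ≤ ∫⁻ z, ENNReal.ofReal (2 ^ r) * (ENNReal.ofReal (dist z.1 y0 ^ r)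
          + ENNReal.ofReal (dist y0 z.2 ^ r)) ∂π := lintegral_mono hb
    _ = ENNReal.ofReal (2 ^ r) * ((∫⁻ z, ENNReal.ofReal (dist z.1 y0 ^ r) ∂π)
          + ∫⁻ z, ENNReal.ofReal (dist y0 z.2 ^ r) ∂π) := by
        rw [lintegral_const_mul' _ _ ENNReal.ofReal_ne_top, lintegral_add_left hm1]
    _ < ∞ := by
        have hmeasY : Measurable fun y : Y => ENNReal.ofReal (dist y y0 ^ r) :=
          (ENNReal.continuous_ofReal.comp
            ((Real.continuous_rpow_const hr).comp
              (continuous_id.dist continuous_const))).measurable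
        have e1 : ∫⁻ z, ENNReal.ofReal (dist z.1 y0 ^ r) ∂π
            = ∫⁻ y, ENNReal.ofReal (dist y y0 ^ r) ∂q1 := by
          conv_rhs => rw [← hπ.1]
          exact (lintegral_map hmeasY measurable_fst).symm
        have e2 : ∫⁻ z, ENNReal.ofReal (dist y0 z.2 ^ r) ∂π
            = ∫⁻ y, ENNReal.ofReal (dist y y0 ^ r) ∂q2 := by
          conv_rhs => rw [← hπ.2]
          rw [lintegral_map hmeasY measurable_snd]
          exact lintegral_congr fun z => by rw [dist_comm]
        rw [e1, e2]
        exact ENNReal.mul_lt_top ENNReal.ofReal_lt_top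
          (ENNReal.add_lt_top.2 ⟨lintegral_moment_lt_top hr q1 h1.2 y0,
            lintegral_moment_lt_top hr q2 h2.2 y0⟩)

private lemma measure_map_finset_sum {α β ι : Type*} [MeasurableSpace α] [MeasurableSpace β]
    (s : Finset ι) (μ : ι → Measure α) {f : α → β} (hf : Measurable f) :
    (∑ i ∈ s, μ i).map f = ∑ i ∈ s, (μ i).map f := by
  ext t ht
  simp [Measure.map_apply hf ht, Measure.finset_sum_apply]

private lemma withDensity_finsum {α ι : Type*} [MeasurableSpace α] (μ : Measure α)
    (s : Finset ι) (f : ι → α → ℝ≥0∞) (hf : ∀ i, Measurable (f i)) :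
    μ.withDensity (fun a => ∑ i ∈ s, f i a) = ∑ i ∈ s, μ.withDensity (f i) := by
  classical
  induction s using Finset.induction with
  | empty => simp
  | insert a s' h ih =>
    simp only [Finset.sum_insert h]
    rw [← ih]
    exact withDensity_add_left (hf a) _

private lemma map_snd_withDensity {A B : Type*} [MeasurableSpace A] [MeasurableSpace B]
    (μ : Measure (A × B)) {f : B → ℝ≥0∞} (hf : Measurable f) :
    ((μ.withDensity fun z => f z.2).map Prod.snd) = (μ.map Prod.snd).withDensity f := by
  ext t ht
  rw [Measure.map_apply measurable_snd ht, withDensity_apply _ (measurable_snd ht),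
    withDensity_apply _ ht, setLIntegral_map ht hf measurable_snd]

end AuxGamma


/-- **Closedness of `Γ_N^ε`** (Lemma 3.4), stated sequentially: any limit (in
`X`-topology and in `W_r`) of tuples in `Γ_N^ε` again lies in `Γ_N^ε`. -/
theorem gammaNEps_closed {X Y : Type*}
    [TopologicalSpace X] [PolishSpace X]
    [MeasurableSpace Y] [MetricSpace Y] [PolishSpace Y] [BorelSpace Y]
    (r : ℝ) (hr : 1 ≤ r)
    (C : X → Measure Y → ℝ)
    (hC : ∀ (x : X) (p : Measure Y) (xk : ℕ → X) (pk : ℕ → Measure Y),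
      MemPr r p → (∀ k, MemPr r (pk k)) →
      Tendsto xk atTop (nhds x) → TendstoWr r pk p →
      Tendsto (fun k => C (xk k) (pk k)) atTop (nhds (C x p)))
    (ε : ℝ) (hε : 0 ≤ ε) (N : ℕ)
    (xk : ℕ → Fin N → X) (pk : ℕ → Fin N → Measure Y)
    (hmem : ∀ k, (xk k, pk k) ∈ GammaNEps C r ε N)
    (x : Fin N → X) (p : Fin N → Measure Y)
    (hp : ∀ i, MemPr r (p i))
    (hxconv : ∀ i, Tendsto (fun k => xk k i) atTop (nhds (x i)))
    (hpconv : ∀ i, TendstoWr r (fun k => pk k i) (p i)) :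
    (x, p) ∈ GammaNEps C r ε N := by
    classical
  refine ⟨hp, ?_⟩
  intro m hm hsum
  rcases Nat.eq_zero_or_pos N with hN | hN
  · subst hN
    simpa using hε
  have hr0 : (0 : ℝ) ≤ r := le_trans zero_le_one hr
  have hprob_p : ∀ i, IsProbabilityMeasure (p i) := fun i => (hp i).1
  have hprob_m : ∀ i, IsProbabilityMeasure (m i) := fun i => (hm i).1
  have hprob_pk : ∀ k i, IsProbabilityMeasure (pk k i) := fun k i => ((hmem k).1 i).1
  set S : Measure Y := ∑ i, p i with hS
  haveI hSfin : IsFiniteMeasure S := by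
    constructor
    rw [hS, Measure.finset_sum_apply]
    exact ENNReal.sum_lt_top.2 fun i _ => measure_lt_top _ _
  have hm_le : ∀ i, m i ≤ S := by
    intro i
    rw [hsum]
    refine Measure.le_iff'.2 fun s => ?_
    rw [Measure.finset_sum_apply]
    exact Finset.single_le_sum (f := fun j => m j s) (fun j _ => zero_le) (Finset.mem_univ i)
  -- densities of the competitors with respect to S
  set F : Fin N → Y → ℝ≥0∞ := fun i => (m i).rnDeriv S with hFdef
  have hF : ∀ i, Measurable (F i) := fun i => Measure.measurable_rnDeriv _ _
  have hFd : ∀ i, S.withDensity (F i) = m i := by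
    intro i
    haveI := hprob_m i
    exact Measure.withDensity_rnDeriv_eq _ _ (hm_le i).absolutelyContinuous
  have hFsum_meas : Measurable fun y => ∑ i, F i y :=
    Finset.measurable_sum _ fun i _ => hF i
  have hSd : S.withDensity (fun y => ∑ i, F i y) = S := by
    rw [withDensity_finsum S Finset.univ F hF]
    simp_rw [hFd]
    exact hsum.symm
  have hFone : ∀ᵐ y ∂S, ∑ i, F i y = 1 := by
    have h1 := Measure.rnDeriv_withDensity S hFsum_meas
    rw [hSd] at h1
    filter_upwards [h1, Measure.rnDeriv_self S] with y h1y h2y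
    rw [← h1y, h2y]
  -- nonnegativity and lower bounds for Wasserstein cost sets
  have hbdd : ∀ a b : Measure Y,
      BddBelow {v | ∃ π : Measure (Y × Y), IsCoupling π a b ∧ v = ∫ z, dist z.1 z.2 ^ r ∂π} := by
    intro a b
    refine ⟨0, ?_⟩
    rintro v ⟨π, -, rfl⟩
    exact integral_nonneg fun z => Real.rpow_nonneg dist_nonneg r
  have hWr_nonneg : ∀ a b : Measure Y, 0 ≤ WrPow r a b := by
    intro a b
    refine Real.sInf_nonneg ?_
    rintro v ⟨π, -, rfl⟩
    exact integral_nonneg fun z => Real.rpow_nonneg dist_nonneg r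
  -- nearly optimal couplings
  have hchoice : ∀ k j, ∃ π : Measure (Y × Y), IsCoupling π (pk k j) (p j) ∧
      ∫ z, dist z.1 z.2 ^ r ∂π < WrPow r (pk k j) (p j) + 1 / (k + 1 : ℝ) := by
    intro k j
    haveI := hprob_pk k j
    haveI := hprob_p j
    have hne : Set.Nonempty {v | ∃ π : Measure (Y × Y),
        IsCoupling π (pk k j) (p j) ∧ v = ∫ z, dist z.1 z.2 ^ r ∂π} := by
      refine ⟨_, (pk k j).prod (p j), ⟨?_, ?_⟩, rfl⟩
      · rw [Measure.map_fst_prod]; simp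
      · rw [Measure.map_snd_prod]; simp
    have hpos : (0 : ℝ) < 1 / (k + 1 : ℝ) := by positivity
    obtain ⟨v, ⟨π, hπ, rfl⟩, hlt⟩ := Real.lt_sInf_add_pos hne hpos
    exact ⟨π, hπ, hlt⟩
  choose πc hπc hπlt using hchoice
  have hLfin : ∀ k j, ∫⁻ z, ENNReal.ofReal (dist z.1 z.2 ^ r) ∂(πc k j) < ∞ := fun k j =>
    cost_lt_top hr0 ((hmem k).1 j) (hp j) (hπc k j)
  have hval : ∀ (μ : Measure (Y × Y)),
      ∫ z, dist z.1 z.2 ^ r ∂μ = (∫⁻ z, ENNReal.ofReal (dist z.1 z.2 ^ r) ∂μ).toReal := by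
    intro μ
    rw [integral_eq_lintegral_of_nonneg_ae
      (ae_of_all _ fun z => Real.rpow_nonneg dist_nonneg r)
      ((Real.continuous_rpow_const hr0).comp continuous_dist).aestronglyMeasurable]
  -- the glued couplings and the transported competitors
  set P : ℕ → Measure (Y × Y) := fun k => ∑ j, πc k j with hPdef
  have hPfst : ∀ k, (P k).map Prod.fst = ∑ j, pk k j := by
    intro k
    rw [hPdef, measure_map_finset_sum _ _ measurable_fst]
    exact Finset.sum_congr rfl fun j _ => (hπc k j).1
  have hPsnd : ∀ k, (P k).map Prod.snd = S := by
    intro k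
    rw [hPdef, measure_map_finset_sum _ _ measurable_snd, hS]
    exact Finset.sum_congr rfl fun j _ => (hπc k j).2
  set Pi : ℕ → Fin N → Measure (Y × Y) :=
    fun k i => (P k).withDensity (fun z => F i z.2) with hPidef
  set mk : ℕ → Fin N → Measure Y := fun k i => (Pi k i).map Prod.fst with hmkdef
  have hsnd_i : ∀ k i, (Pi k i).map Prod.snd = m i := by
    intro k i
    rw [hPidef, map_snd_withDensity _ (hF i), hPsnd, hFd]
  have hcoupling : ∀ k i, IsCoupling (Pi k i) (mk k i) (m i) := fun k i => ⟨rfl, hsnd_i k i⟩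
  have hPdens : ∀ k, (P k).withDensity (fun z => ∑ j, F j z.2) = P k := by
    intro k
    have hsmeas : MeasurableSet {y : Y | ∑ j, F j y = 1} :=
      hFsum_meas (measurableSet_singleton 1)
    have hae : ∀ᵐ z ∂(P k), ∑ j, F j z.2 = 1 := by
      have h1 : ∀ᵐ y ∂((P k).map Prod.snd), ∑ j, F j y = 1 := by
        rw [hPsnd k]; exact hFone
      exact (ae_map_iff measurable_snd.aemeasurable hsmeas).1 h1
    calc (P k).withDensity (fun z => ∑ j, F j z.2)
        = (P k).withDensity 1 := withDensity_congr_ae hae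
      _ = P k := withDensity_one
  have hPi_le : ∀ k i, Pi k i ≤ P k := by
    intro k i
    have hle : (fun z : Y × Y => F i z.2) ≤ᵐ[P k] fun z => ∑ j, F j z.2 :=
      ae_of_all _ fun z =>
        Finset.single_le_sum (f := fun j => F j z.2) (fun j _ => zero_le) (Finset.mem_univ i)
    calc Pi k i ≤ (P k).withDensity (fun z => ∑ j, F j z.2) := withDensity_mono hle
      _ = P k := hPdens k
  have hsum_mk : ∀ k, (∑ i, pk k i) = ∑ i, mk k i := by
    intro k
    have h1 : (∑ i, Pi k i) = P k := by
      have h2 : (∑ i, Pi k i) = (P k).withDensity (fun z => ∑ j, F j z.2) :=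
        (withDensity_finsum (P k) Finset.univ (fun i z => F i z.2)
          (fun i => (hF i).comp measurable_snd)).symm
      rw [h2]
      exact hPdens k
    calc (∑ i, pk k i) = (P k).map Prod.fst := (hPfst k).symm
      _ = (∑ i, Pi k i).map Prod.fst := by rw [h1]
      _ = ∑ i, mk k i := measure_map_finset_sum _ _ measurable_fst
  have hmass : ∀ k i, IsProbabilityMeasure (mk k i) := by
    intro k i
    haveI := hprob_m i
    constructor
    have h1 : mk k i Set.univ = Pi k i Set.univ := by
      rw [hmkdef, Measure.map_apply measurable_fst MeasurableSet.univ, Set.preimage_univ]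
    have h2 : (Pi k i).map Prod.snd Set.univ = Pi k i Set.univ := by
      rw [Measure.map_apply measurable_snd MeasurableSet.univ, Set.preimage_univ]
    rw [h1, ← h2, hsnd_i k i]
    exact measure_univ
  have hmemPr_mk : ∀ k i, MemPr r (mk k i) := by
    intro k i
    refine ⟨hmass k i, ?_⟩
    obtain ⟨y0, -⟩ := (hp ⟨0, hN⟩).2
    refine ⟨y0, ?_⟩
    have hle : mk k i ≤ ∑ j, pk k j := by
      rw [← hPfst k]
      exact Measure.map_mono (hPi_le k i) measurable_fst
    refine Integrable.mono_measure ?_ hle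
    rw [integrable_finset_sum_measure]
    intro j _
    haveI := hprob_pk k j
    exact integrable_moment hr0 _ ((hmem k).1 j).2 y0
  -- cost control
  set c : ℕ → ℝ := fun k => ∑ j, ∫ z, dist z.1 z.2 ^ r ∂(πc k j) with hcdef
  have hWmk : ∀ k i, WrPow r (mk k i) (m i) ≤ c k := by
    intro k i
    have hmem' : (∫ z, dist z.1 z.2 ^ r ∂(Pi k i)) ∈
        {v | ∃ π : Measure (Y × Y), IsCoupling π (mk k i) (m i) ∧
          v = ∫ z, dist z.1 z.2 ^ r ∂π} := ⟨Pi k i, hcoupling k i, rfl⟩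
    refine le_trans (csInf_le (hbdd _ _) hmem') ?_
    have h2 : ∫⁻ z, ENNReal.ofReal (dist z.1 z.2 ^ r) ∂(Pi k i)
        ≤ ∑ j, ∫⁻ z, ENNReal.ofReal (dist z.1 z.2 ^ r) ∂(πc k j) := by
      calc ∫⁻ z, ENNReal.ofReal (dist z.1 z.2 ^ r) ∂(Pi k i)
          ≤ ∫⁻ z, ENNReal.ofReal (dist z.1 z.2 ^ r) ∂(P k) :=
            lintegral_mono' (hPi_le k i) le_rfl
        _ = ∑ j, ∫⁻ z, ENNReal.ofReal (dist z.1 z.2 ^ r) ∂(πc k j) := by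
            rw [hPdef]
            exact lintegral_finset_sum_measure Finset.univ _ _
    rw [hval]
    calc (∫⁻ z, ENNReal.ofReal (dist z.1 z.2 ^ r) ∂(Pi k i)).toReal
        ≤ (∑ j, ∫⁻ z, ENNReal.ofReal (dist z.1 z.2 ^ r) ∂(πc k j)).toReal :=
          ENNReal.toReal_mono (ENNReal.sum_lt_top.2 fun j _ => hLfin k j).ne h2
      _ = ∑ j, (∫⁻ z, ENNReal.ofReal (dist z.1 z.2 ^ r) ∂(πc k j)).toReal :=
          ENNReal.toReal_sum fun j _ => (hLfin k j).ne
      _ = c k := by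
          rw [hcdef]
          exact Finset.sum_congr rfl fun j _ => (hval _).symm
  have hc0 : Tendsto c atTop (𝓝 0) := by
    have hterm : ∀ j, Tendsto (fun k => ∫ z, dist z.1 z.2 ^ r ∂(πc k j)) atTop (𝓝 0) := by
      intro j
      refine squeeze_zero
        (fun k => integral_nonneg fun z => Real.rpow_nonneg dist_nonneg r)
        (fun k => (hπlt k j).le) ?_
      have h1 : Tendsto (fun k : ℕ => WrPow r (pk k j) (p j) + 1 / (k + 1 : ℝ)) atTop
          (𝓝 (0 + 0)) := Tendsto.add (hpconv j) tendsto_one_div_add_atTop_nhds_zero_nat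
      simpa using h1
    have h2 := tendsto_finset_sum (Finset.univ : Finset (Fin N))
      (fun j _ => hterm j)
    simpa [hcdef] using h2
  have hWmk0 : ∀ i, TendstoWr r (fun k => mk k i) (m i) := fun i =>
    squeeze_zero (fun k => hWr_nonneg _ _) (fun k => hWmk k i) hc0
  -- pass to the limit
  have hlhs : Tendsto (fun k => ∑ i, C (xk k i) (pk k i)) atTop
      (𝓝 (∑ i, C (x i) (p i))) :=
    tendsto_finset_sum _ fun i _ =>
      hC (x i) (p i) _ _ (hp i) (fun k => (hmem k).1 i) (hxconv i) (hpconv i)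
  have hrhs : Tendsto (fun k => (∑ i, C (xk k i) (mk k i)) + ε) atTop
      (𝓝 ((∑ i, C (x i) (m i)) + ε)) :=
    (tendsto_finset_sum _ fun i _ =>
      hC (x i) (m i) _ _ (hm i) (fun k => hmemPr_mk k i) (hxconv i) (hWmk0 i)).add
      tendsto_const_nhds
  exact le_of_tendsto_of_tendsto' hlhs hrhs fun k =>
    (hmem k).2 (mk k) (fun i => hmemPr_mk k i) (hsum_mk k)
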